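/- arXiv:1204.2887 — 5 statements merged into one kernel-verified Lean document; each statement's English description precedes it below -/
import Mathlib

section
/- Suppose f is a continuously differentiable function on I and 0 < a < b. Then there exists l > 0 such that each of the following sets contains an open interval of length l: (1) {y ∈ [x, x+2^{−a}] : f(y) − f(x) > a(y−x)} for every x ∈ [0, 1−2^{−a}] \ N⁺(f,b); (2) {y ∈ [x, x+2^{−a}] : f(y) − f(x) < −a(y−x)} for every x ∈ [0, 1−2^{−a}] \ N₊(f,b); (3) {y ∈ [x−2^{−a}, x] : f(y) − f(x) < a(y−x)} for every x ∈ [2^{−a}, 1] \ N⁻(f,b); (4) {y ∈ [x−2^{−a}, x] : f(y) − f(x) > −a(y−x)} for every x ∈ [2^{−a}, 1] \ N₋(f,b). -/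
open Filter Topology TopologicalSpace Set MeasureTheory

noncomputable section

/-- The unit interval `I = [0,1]` as a type. -/
abbrev UI : Type := ↥(Set.Icc (0:ℝ) 1)

/-- The space `𝒦` of closed subsets of `I`, with the (extended) Hausdorff metric topology. -/
abbrev KSp : Type := TopologicalSpace.Closeds UI

/-- The open `r`-neighbourhood of a set `A` within `I`. -/
def nbhd (A : Set UI) (r : ℝ) : Set UI := ⋃ a ∈ A, Metric.ball a r

/-- Upper right Dini derivative `D⁺f(x)`, as an extended real. -/
def DiniSupR (f : UI → ℝ) (x : UI) : EReal :=
  Filter.limsup (fun y : UI => (((f y - f x) / ((y : ℝ) - (x : ℝ))) : EReal)) (𝓝[>] x)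

/-- Lower right Dini derivative `D₊f(x)`. -/
def DiniInfR (f : UI → ℝ) (x : UI) : EReal :=
  Filter.liminf (fun y : UI => (((f y - f x) / ((y : ℝ) - (x : ℝ))) : EReal)) (𝓝[>] x)

/-- Upper left Dini derivative `D⁻f(x)`. -/
def DiniSupL (f : UI → ℝ) (x : UI) : EReal :=
  Filter.limsup (fun y : UI => (((f y - f x) / ((y : ℝ) - (x : ℝ))) : EReal)) (𝓝[<] x)

/-- Lower left Dini derivative `D₋f(x)`. -/
def DiniInfL (f : UI → ℝ) (x : UI) : EReal :=
  Filter.liminf (fun y : UI => (((f y - f x) / ((y : ℝ) - (x : ℝ))) : EReal)) (𝓝[<] x)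

/-- `x` is a knot point of `f`. -/
def IsKnotPoint (f : UI → ℝ) (x : UI) : Prop :=
  (0 < (x:ℝ) ∧ (x:ℝ) < 1 ∧ DiniSupR f x = ⊤ ∧ DiniSupL f x = ⊤ ∧
      DiniInfR f x = ⊥ ∧ DiniInfL f x = ⊥) ∨
  ((x:ℝ) = 0 ∧ DiniSupR f x = ⊤ ∧ DiniInfR f x = ⊥) ∨
  ((x:ℝ) = 1 ∧ DiniSupL f x = ⊤ ∧ DiniInfL f x = ⊥)

/-- `N(f)`: the set of points of `I` that are not knot points of `f`. -/
def NonKnot (f : UI → ℝ) : Set UI := {x | ¬ IsKnotPoint f x}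

/-- `S` is an `Fσ` subset of `I`. -/
def IsFsigma (S : Set UI) : Prop :=
  ∃ F : ℕ → Set UI, (∀ n, IsClosed (F n)) ∧ S = ⋃ n, F n

/-- `N⁺(f,a)`. -/
def NplusUp (f : UI → ℝ) (a : ℝ) : Set UI :=
  {x | (x:ℝ) ≤ 1 - 2^(-a) ∧
    ∀ y : UI, (x:ℝ) ≤ (y:ℝ) → (y:ℝ) ≤ (x:ℝ) + 2^(-a) →
      f y - f x ≤ a * ((y:ℝ) - (x:ℝ))}

/-- `N₊(f,a)`. -/
def NplusLow (f : UI → ℝ) (a : ℝ) : Set UI :=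
  {x | (x:ℝ) ≤ 1 - 2^(-a) ∧
    ∀ y : UI, (x:ℝ) ≤ (y:ℝ) → (y:ℝ) ≤ (x:ℝ) + 2^(-a) →
      -a * ((y:ℝ) - (x:ℝ)) ≤ f y - f x}

/-- `N⁻(f,a)`. -/
def NminusUp (f : UI → ℝ) (a : ℝ) : Set UI :=
  {x | 2^(-a) ≤ (x:ℝ) ∧
    ∀ y : UI, (x:ℝ) - 2^(-a) ≤ (y:ℝ) → (y:ℝ) ≤ (x:ℝ) →
      a * ((y:ℝ) - (x:ℝ)) ≤ f y - f x}

/-- `N₋(f,a)`. -/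
def NminusLow (f : UI → ℝ) (a : ℝ) : Set UI :=
  {x | 2^(-a) ≤ (x:ℝ) ∧
    ∀ y : UI, (x:ℝ) - 2^(-a) ≤ (y:ℝ) → (y:ℝ) ≤ (x:ℝ) →
      f y - f x ≤ -a * ((y:ℝ) - (x:ℝ))}

/-- `N̂(f,a) = N⁺(f,a) ∪ N₋(f,a)`. -/
def Nhat (f : UI → ℝ) (a : ℝ) : Set UI := NplusUp f a ∪ NminusLow f a

/-- `Ň(f,a) = N₊(f,a) ∪ N⁻(f,a)`. -/
def Ncheck (f : UI → ℝ) (a : ℝ) : Set UI := NplusLow f a ∪ NminusUp f a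

/-- `N(f,a)`. -/
def NN (f : UI → ℝ) (a : ℝ) : Set UI := Nhat f a ∪ Ncheck f a

/-- `f : I → ℝ` is continuously differentiable on `I`. -/
def IsC1 (f : UI → ℝ) : Prop :=
  ContDiffOn ℝ 1 (Set.IccExtend (zero_le_one : (0:ℝ) ≤ 1) f) (Set.Icc (0:ℝ) 1)

/-- `φ` is a bump function of height `h` and width `w` located at `H1` and `H2`. -/
def IsBump (φ : C(UI, ℝ)) (h w : ℝ) (H1 H2 : Set UI) : Prop :=
  IsC1 ⇑φ ∧ ‖φ‖ = h ∧ (∀ x ∈ H1, φ x = h) ∧ (∀ x ∈ H2, φ x = -h) ∧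
  {x : UI | 0 < φ x} ⊆ nbhd H1 w ∧ {x : UI | φ x < 0} ⊆ nbhd H2 w

/-- The shifted sequence `n^k`. -/
def shiftSeq (n : ℕ → ℕ) (k : ℕ) : ℕ → ℕ := fun j => n (j + k)

/-- The index set `A_j^m(n) = [n_j] ∪ ⋃_{i=j}^{m-1} {n_i+1, …, n_i+j-1}`. -/
def Aset (n : ℕ → ℕ) (j m : ℕ) : Set ℕ :=
  Set.Icc 1 (n j) ∪ ⋃ i ∈ Set.Ico j m, Set.Icc (n i + 1) (n i + (j - 1))

/-- `n ∈ Z`: sequence of positive integers with `n_{j+1} ≥ n_j + j`. -/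
def memZ (n : ℕ → ℕ) : Prop := ∀ j, 1 ≤ j → 1 ≤ n j ∧ n j + j ≤ n (j + 1)

/-- `δ ∈ Y`: strictly decreasing sequence in `(0,1)` tending to `0`. -/
def memY (δ : ℕ → ℝ) : Prop :=
  (∀ j, 1 ≤ j → 0 < δ j ∧ δ j < 1) ∧ (∀ j, 1 ≤ j → δ (j + 1) < δ j) ∧
    Filter.Tendsto δ Filter.atTop (𝓝 0)

/-- `a ∈ X`: strictly increasing sequence of positive reals tending to `∞`. -/
def memX (a : ℕ → ℝ) : Prop :=
  (∀ j, 1 ≤ j → 0 < a j) ∧ (∀ j, 1 ≤ j → a j < a (j + 1)) ∧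
    Filter.Tendsto a Filter.atTop Filter.atTop

/-- `K ∈ 𝒮_k(n,δ)`. -/
def memS (K : ℕ → KSp) (n : ℕ → ℕ) (δ : ℕ → ℝ) (k : ℕ) : Prop :=
  ∀ j m, 2 ≤ j → j + 1 ≤ m →
    (⋃ i ∈ Aset (shiftSeq n k) j m \ Aset (shiftSeq n k) j (m - 1), (K i : Set UI))
      ⊆ ⋃ i ∈ Aset (shiftSeq n k) (j - 1) (m - 1), nbhd (K i : Set UI) (δ m)

/-- `(K, f, n, δ, a, b) ∈ 𝒴_k`. -/
def memYk (K : ℕ → KSp) (f : C(UI, ℝ)) (n : ℕ → ℕ) (δ : ℕ → ℝ) (a b : ℕ → ℝ)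
    (k : ℕ) : Prop :=
  memZ n ∧ memY δ ∧ memX a ∧ memX b ∧ memS K n δ k ∧
  ∀ j m, 1 ≤ j → j ≤ m →
    NN ⇑f (a j) ⊆ (⋃ i ∈ Aset (shiftSeq n k) j m, nbhd (K i : Set UI) (δ m)) ∧
    (⋃ i ∈ Aset n j m, (K i : Set UI)) ⊆ nbhd (NN ⇑f (b j)) (δ m)

/-- `(K, f) ∈ 𝒳`: the projection of `𝒴 = ⋃_k 𝒴_k` to `𝒦^ℕ × C(I)`. -/
def memXcal (K : ℕ → KSp) (f : C(UI, ℝ)) : Prop :=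
  ∃ n δ a b k, memYk K f n δ a b k

set_option linter.unusedVariables false in
lemma core_lemma (F g : ℝ → ℝ) (a b r l : ℝ) (ha : 0 < a) (hab : a < b)
    (hl : 0 < l) (hlr : l ≤ r)
    (hF : ContinuousOn F (Set.Icc 0 1))
    (hg : ∀ t ∈ Set.Ioo (0:ℝ) 1, HasDerivAt F (g t) t)
    (hgu : ∀ s ∈ Set.Icc (0:ℝ) 1, ∀ t ∈ Set.Icc (0:ℝ) 1, |s - t| ≤ r → |g s - g t| ≤ b - a)
    (x y₀ : ℝ) (hx0 : 0 ≤ x) (hy1 : y₀ ≤ 1) (hxy : x < y₀)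
    (hslope : b * (y₀ - x) < F y₀ - F x) (hl1 : y₀ + l ≤ 1) :
    ∃ u, x ≤ u ∧ u ≤ y₀ ∧ ∀ y ∈ Set.Ioo u (u + l), a * (y - x) < F y - F x := by
  have hsub : Set.Icc x y₀ ⊆ Set.Icc (0:ℝ) 1 := Set.Icc_subset_Icc hx0 hy1
  set S : Set ℝ := Set.Icc x y₀ ∩ {t | F t - F x - a * (t - x) ≤ 0} with hSdef
  have hxS : x ∈ S := ⟨⟨le_refl x, hxy.le⟩, by simp⟩
  have hScl : IsClosed S := by
    apply ((hF.mono hsub).sub (continuousOn_const)).sub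
      ((continuousOn_const.mul (continuousOn_id.sub continuousOn_const)))
      |>.preimage_isClosed_of_isClosed isClosed_Icc isClosed_Iic
  have hSbdd : BddAbove S := ⟨y₀, fun t ht => ht.1.2⟩
  set c := sSup S with hc
  have hcS : c ∈ S := hScl.csSup_mem ⟨x, hxS⟩ hSbdd
  have hxc : x ≤ c := le_csSup hSbdd hxS
  have hcy : c ≤ y₀ := hcS.1.2
  have hcle : F c - F x ≤ a * (c - x) := by have := hcS.2; simp at this; linarith
  have hcy' : c < y₀ := by
    rcases lt_or_eq_of_le hcy with h | h
    · exact h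
    · exfalso; rw [h] at hcle; nlinarith
  have h_above : ∀ t, c < t → t ≤ y₀ → a * (t - x) < F t - F x := by
    intro t ht ht'
    by_contra hcon
    push_neg at hcon
    exact absurd (le_csSup hSbdd ⟨⟨hxc.trans ht.le, ht'⟩, by simp; linarith⟩) (not_le.2 ht)
  obtain ⟨ξ, hξmem, hξeq⟩ := exists_hasDerivAt_eq_slope F g hcy'
    (hF.mono (Set.Icc_subset_Icc (hx0.trans hxc) hy1))
    (fun t ht => hg t ⟨lt_of_le_of_lt (hx0.trans hxc) ht.1, lt_of_lt_of_le ht.2 hy1⟩)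
  have hgξ : b < g ξ := by
    rw [hξeq, lt_div_iff₀ (by linarith [hξmem.1, hξmem.2] : (0:ℝ) < y₀ - c)]
    nlinarith [hcS.1.1]
  have hhξ : a * (ξ - x) < F ξ - F x := h_above ξ hξmem.1 hξmem.2.le
  have hξ0 : 0 < ξ := lt_of_le_of_lt (hx0.trans hxc) hξmem.1
  refine ⟨ξ, hxc.trans hξmem.1.le, hξmem.2.le, ?_⟩
  intro y hy
  have hy1' : y ≤ 1 := by have := hy.2; linarith [hξmem.2]
  obtain ⟨η, hηmem, hηeq⟩ := exists_hasDerivAt_eq_slope F g hy.1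
    (hF.mono (Set.Icc_subset_Icc hξ0.le hy1'))
    (fun t ht => hg t ⟨hξ0.trans ht.1, lt_of_lt_of_le ht.2 hy1'⟩)
  have hη01 : η ∈ Set.Icc (0:ℝ) 1 := ⟨(hξ0.trans hηmem.1).le, hηmem.2.le.trans hy1'⟩
  have hξ01 : ξ ∈ Set.Icc (0:ℝ) 1 := ⟨hξ0.le, by linarith [hξmem.2]⟩
  have habs : |η - ξ| ≤ r := by
    rw [abs_of_nonneg (by linarith [hηmem.1] : (0:ℝ) ≤ η - ξ)]
    have := hηmem.2; have := hy.2; linarith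
  have hgη : a < g η := by
    have h2 := hgu η hη01 ξ hξ01 habs
    have := abs_le.1 h2
    linarith [this.1]
  have hFy : a * (y - ξ) < F y - F ξ := by
    have hpos : (0:ℝ) < y - ξ := by linarith [hy.1]
    have hpos2 := hpos
    have : g η * (y - ξ) = F y - F ξ := by
      rw [hηeq, div_mul_cancel₀ _ hpos.ne']
    nlinarith
  nlinarith

/-- If `f ∈ C¹(I)` and `0 < a < b`, then there is `l > 0` such that each of the four sets
described in Proposition 3.18 contains an open interval of length `l`. -/
theorem exists_interval_of_C1 (f : UI → ℝ) (hf : IsC1 f) (a b : ℝ)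
    (ha : 0 < a) (hab : a < b) :
    ∃ l > 0,
      (∀ x : UI, (x:ℝ) ≤ 1 - 2^(-a) → x ∉ NplusUp f b →
        ∃ u : ℝ, Set.Ioo u (u + l) ⊆ Set.Icc (0:ℝ) 1 ∧
          ∀ y : UI, (y:ℝ) ∈ Set.Ioo u (u + l) →
            (x:ℝ) ≤ (y:ℝ) ∧ (y:ℝ) ≤ (x:ℝ) + 2^(-a) ∧
              a * ((y:ℝ) - (x:ℝ)) < f y - f x) ∧
      (∀ x : UI, (x:ℝ) ≤ 1 - 2^(-a) → x ∉ NplusLow f b →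
        ∃ u : ℝ, Set.Ioo u (u + l) ⊆ Set.Icc (0:ℝ) 1 ∧
          ∀ y : UI, (y:ℝ) ∈ Set.Ioo u (u + l) →
            (x:ℝ) ≤ (y:ℝ) ∧ (y:ℝ) ≤ (x:ℝ) + 2^(-a) ∧
              f y - f x < -a * ((y:ℝ) - (x:ℝ))) ∧
      (∀ x : UI, 2^(-a) ≤ (x:ℝ) → x ∉ NminusUp f b →
        ∃ u : ℝ, Set.Ioo u (u + l) ⊆ Set.Icc (0:ℝ) 1 ∧
          ∀ y : UI, (y:ℝ) ∈ Set.Ioo u (u + l) →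
            (x:ℝ) - 2^(-a) ≤ (y:ℝ) ∧ (y:ℝ) ≤ (x:ℝ) ∧
              f y - f x < a * ((y:ℝ) - (x:ℝ))) ∧
      (∀ x : UI, 2^(-a) ≤ (x:ℝ) → x ∉ NminusLow f b →
        ∃ u : ℝ, Set.Ioo u (u + l) ⊆ Set.Icc (0:ℝ) 1 ∧
          ∀ y : UI, (y:ℝ) ∈ Set.Ioo u (u + l) →
            (x:ℝ) - 2^(-a) ≤ (y:ℝ) ∧ (y:ℝ) ≤ (x:ℝ) ∧
              -a * ((y:ℝ) - (x:ℝ)) < f y - f x) := by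

  set F : ℝ → ℝ := Set.IccExtend (zero_le_one : (0:ℝ) ≤ 1) f with hFdef
  have hFf : ∀ y : UI, F (y:ℝ) = f y := fun y => Set.IccExtend_val _ f y
  have hFc1 : ContDiffOn ℝ 1 F (Set.Icc 0 1) := hf
  set g : ℝ → ℝ := derivWithin F (Set.Icc 0 1) with hgdef
  have hgcont : ContinuousOn g (Set.Icc 0 1) :=
    hFc1.continuousOn_derivWithin (uniqueDiffOn_Icc one_pos) le_rfl
  have hFcont : ContinuousOn F (Set.Icc 0 1) := hFc1.continuousOn
  have hdiff : DifferentiableOn ℝ F (Set.Icc 0 1) := hFc1.differentiableOn one_ne_zero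
  have hg : ∀ t ∈ Set.Ioo (0:ℝ) 1, HasDerivAt F (g t) t := fun t ht =>
    ((hdiff t (Set.Ioo_subset_Icc_self ht)).hasDerivWithinAt).hasDerivAt
      (Icc_mem_nhds ht.1 ht.2)
  obtain ⟨δ, hδ, hδ'⟩ := Metric.uniformContinuousOn_iff.1
    (isCompact_Icc.uniformContinuousOn_of_continuous hgcont) (b - a) (by linarith)
  have hgu : ∀ s ∈ Set.Icc (0:ℝ) 1, ∀ t ∈ Set.Icc (0:ℝ) 1, |s - t| ≤ δ / 2 →
      |g s - g t| ≤ b - a := by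
    intro s hs t ht hst
    have := hδ' s hs t ht (by rw [Real.dist_eq]; linarith)
    rw [Real.dist_eq] at this; linarith
  have h2b : (0:ℝ) < 2 ^ (-b) := Real.rpow_pos_of_pos two_pos _
  have h2a : (0:ℝ) < 2 ^ (-a) := Real.rpow_pos_of_pos two_pos _
  have hba2 : (2:ℝ) ^ (-b) < 2 ^ (-a) :=
    Real.rpow_lt_rpow_of_exponent_lt one_lt_two (by linarith)
  set l := min (δ / 2) (2 ^ (-a) - 2 ^ (-b)) with hldef
  have hl : 0 < l := lt_min (by linarith) (by linarith)
  have hlr : l ≤ δ / 2 := min_le_left _ _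
  have hlab : l ≤ 2 ^ (-a) - 2 ^ (-b) := min_le_right _ _
  refine ⟨l, hl, ?_, ?_, ?_, ?_⟩
  · -- Case 1
    intro x hx hxN
    have hex : ¬ ∀ y : UI, (x:ℝ) ≤ (y:ℝ) → (y:ℝ) ≤ (x:ℝ) + 2^(-b) →
        f y - f x ≤ b * ((y:ℝ) - (x:ℝ)) := fun hall => hxN ⟨by linarith, hall⟩
    push_neg at hex
    obtain ⟨y₀, hxy₀, hy₀b, hlt⟩ := hex
    have hxy : (x:ℝ) < (y₀:ℝ) := by
      rcases lt_or_eq_of_le hxy₀ with h | h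
      · exact h
      · exfalso; have he : y₀ = x := Subtype.ext h.symm
        rw [he] at hlt; simp at hlt
    obtain ⟨u, hu1, hu2, hu3⟩ := core_lemma F g a b (δ/2) l ha hab hl hlr hFcont hg hgu
      (x:ℝ) (y₀:ℝ) x.2.1 y₀.2.2 hxy (by rw [hFf, hFf]; exact hlt) (by linarith)
    refine ⟨u, ?_, ?_⟩
    · intro t ht
      exact ⟨by linarith [ht.1, x.2.1], by linarith [ht.2]⟩
    · intro y hy
      have h3 := hu3 (y:ℝ) hy
      rw [hFf, hFf] at h3
      exact ⟨by linarith [hy.1], by linarith [hy.2], h3⟩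
  · -- Case 2
    intro x hx hxN
    have hex : ¬ ∀ y : UI, (x:ℝ) ≤ (y:ℝ) → (y:ℝ) ≤ (x:ℝ) + 2^(-b) →
        -b * ((y:ℝ) - (x:ℝ)) ≤ f y - f x := fun hall => hxN ⟨by linarith, hall⟩
    push_neg at hex
    obtain ⟨y₀, hxy₀, hy₀b, hlt⟩ := hex
    have hxy : (x:ℝ) < (y₀:ℝ) := by
      rcases lt_or_eq_of_le hxy₀ with h | h
      · exact h
      · exfalso; have he : y₀ = x := Subtype.ext h.symm
        rw [he] at hlt; simp at hlt
    have hslope : b * ((y₀:ℝ) - (x:ℝ)) < (fun t => -F t) (y₀:ℝ) - (fun t => -F t) (x:ℝ) := by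
      show b * ((y₀:ℝ) - (x:ℝ)) < -F (y₀:ℝ) - -F (x:ℝ)
      rw [hFf, hFf]
      have : -b * ((y₀:ℝ) - (x:ℝ)) = -(b * ((y₀:ℝ) - (x:ℝ))) := by ring
      linarith
    obtain ⟨u, hu1, hu2, hu3⟩ := core_lemma (fun t => -F t) (fun t => -g t) a b (δ/2) l
      ha hab hl hlr hFcont.neg (fun t ht => (hg t ht).neg)
      (by intro s hs t ht hst
          have h0 := hgu s hs t ht hst
          calc |(fun t => -g t) s - (fun t => -g t) t| = |g s - g t| := by
                show |-g s - -g t| = _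
                rw [show -g s - -g t = -(g s - g t) by ring, abs_neg]
            _ ≤ b - a := h0)
      (x:ℝ) (y₀:ℝ) x.2.1 y₀.2.2 hxy hslope (by linarith)
    refine ⟨u, ?_, ?_⟩
    · intro t ht
      exact ⟨by linarith [ht.1, x.2.1], by linarith [ht.2]⟩
    · intro y hy
      have h3 := hu3 (y:ℝ) hy
      have h3' : a * ((y:ℝ) - (x:ℝ)) < -F (y:ℝ) - -F (x:ℝ) := h3
      rw [hFf, hFf] at h3'
      refine ⟨by linarith [hy.1], by linarith [hy.2], ?_⟩
      have : -a * ((y:ℝ) - (x:ℝ)) = -(a * ((y:ℝ) - (x:ℝ))) := by ring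
      linarith
  · -- Case 3
    intro x hx hxN
    have hex : ¬ ∀ y : UI, (x:ℝ) - 2^(-b) ≤ (y:ℝ) → (y:ℝ) ≤ (x:ℝ) →
        b * ((y:ℝ) - (x:ℝ)) ≤ f y - f x := fun hall => hxN ⟨by linarith, hall⟩
    push_neg at hex
    obtain ⟨y₀, hxy₀, hy₀b, hlt⟩ := hex
    have hxy : (y₀:ℝ) < (x:ℝ) := by
      rcases lt_or_eq_of_le hy₀b with h | h
      · exact h
      · exfalso; have he : y₀ = x := Subtype.ext h
        rw [he] at hlt; simp at hlt
    have hmaps : ∀ t ∈ Set.Icc (0:ℝ) 1, (1:ℝ) - t ∈ Set.Icc (0:ℝ) 1 := by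
      intro t ht; exact ⟨by linarith [ht.2], by linarith [ht.1]⟩
    have hFc3 : ContinuousOn (fun t => -F (1 - t)) (Set.Icc 0 1) :=
      (hFcont.comp (continuousOn_const.sub continuousOn_id) hmaps).neg
    have hg3 : ∀ t ∈ Set.Ioo (0:ℝ) 1, HasDerivAt (fun t => -F (1 - t)) (g (1 - t)) t := by
      intro t ht
      have h1 : HasDerivAt (fun t : ℝ => 1 - t) (-1) t := (hasDerivAt_id t).const_sub 1
      have h2 := hg (1 - t) ⟨by linarith [ht.2], by linarith [ht.1]⟩
      have h3 := (HasDerivAt.comp t h2 h1).neg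
      have he : -(g (1 - t) * -1) = g (1 - t) := by ring
      rw [he] at h3
      exact h3
    have hgu3 : ∀ s ∈ Set.Icc (0:ℝ) 1, ∀ t ∈ Set.Icc (0:ℝ) 1, |s - t| ≤ δ / 2 →
        |(fun t => g (1 - t)) s - (fun t => g (1 - t)) t| ≤ b - a := by
      intro s hs t ht hst
      have := hgu (1 - s) (hmaps s hs) (1 - t) (hmaps t ht)
        (by rw [show (1 - s) - (1 - t) = -(s - t) by ring, abs_neg]; exact hst)
      exact this
    have hslope : b * ((1 - (y₀:ℝ)) - (1 - (x:ℝ))) <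
        (fun t => -F (1 - t)) (1 - (y₀:ℝ)) - (fun t => -F (1 - t)) (1 - (x:ℝ)) := by
      show _ < -F (1 - (1 - (y₀:ℝ))) - -F (1 - (1 - (x:ℝ)))
      rw [show (1:ℝ) - (1 - (y₀:ℝ)) = (y₀:ℝ) by ring, show (1:ℝ) - (1 - (x:ℝ)) = (x:ℝ) by ring,
        hFf, hFf]
      linarith
    obtain ⟨u, hu1, hu2, hu3⟩ := core_lemma (fun t => -F (1 - t)) (fun t => g (1 - t))
      a b (δ/2) l ha hab hl hlr hFc3 hg3 hgu3
      (1 - (x:ℝ)) (1 - (y₀:ℝ)) (by linarith [x.2.2]) (by linarith [y₀.2.1])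
      (by linarith) hslope (by linarith [x.2.1])
    refine ⟨1 - u - l, ?_, ?_⟩
    · intro t ht
      constructor
      · have : (x:ℝ) - 2^(-a) ≤ t := by linarith [ht.1]
        linarith [hx]
      · have : t ≤ (x:ℝ) := by linarith [ht.2]
        linarith [x.2.2]
    · intro y hy
      have hy' : (1:ℝ) - (y:ℝ) ∈ Set.Ioo u (u + l) := by
        constructor
        · linarith [hy.2]
        · linarith [hy.1]
      have h3 := hu3 (1 - (y:ℝ)) hy'
      have h3' : a * ((1 - (y:ℝ)) - (1 - (x:ℝ))) < -F (1 - (1 - (y:ℝ))) - -F (1 - (1 - (x:ℝ))) := h3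
      rw [show (1:ℝ) - (1 - (y:ℝ)) = (y:ℝ) by ring, show (1:ℝ) - (1 - (x:ℝ)) = (x:ℝ) by ring,
        hFf, hFf] at h3'
      refine ⟨by linarith [hy.1], by linarith [hy.2], ?_⟩
      nlinarith [h3']
  · -- Case 4
    intro x hx hxN
    have hex : ¬ ∀ y : UI, (x:ℝ) - 2^(-b) ≤ (y:ℝ) → (y:ℝ) ≤ (x:ℝ) →
        f y - f x ≤ -b * ((y:ℝ) - (x:ℝ)) := fun hall => hxN ⟨by linarith, hall⟩
    push_neg at hex
    obtain ⟨y₀, hxy₀, hy₀b, hlt⟩ := hex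
    have hxy : (y₀:ℝ) < (x:ℝ) := by
      rcases lt_or_eq_of_le hy₀b with h | h
      · exact h
      · exfalso; have he : y₀ = x := Subtype.ext h
        rw [he] at hlt; simp at hlt
    have hmaps : ∀ t ∈ Set.Icc (0:ℝ) 1, (1:ℝ) - t ∈ Set.Icc (0:ℝ) 1 := by
      intro t ht; exact ⟨by linarith [ht.2], by linarith [ht.1]⟩
    have hFc4 : ContinuousOn (fun t => F (1 - t)) (Set.Icc 0 1) :=
      hFcont.comp (continuousOn_const.sub continuousOn_id) hmaps
    have hg4 : ∀ t ∈ Set.Ioo (0:ℝ) 1, HasDerivAt (fun t => F (1 - t)) (-g (1 - t)) t := by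
      intro t ht
      have h1 : HasDerivAt (fun t : ℝ => 1 - t) (-1) t := (hasDerivAt_id t).const_sub 1
      have h2 := hg (1 - t) ⟨by linarith [ht.2], by linarith [ht.1]⟩
      have h3 := HasDerivAt.comp t h2 h1
      have he : g (1 - t) * -1 = -g (1 - t) := by ring
      rw [he] at h3
      exact h3
    have hgu4 : ∀ s ∈ Set.Icc (0:ℝ) 1, ∀ t ∈ Set.Icc (0:ℝ) 1, |s - t| ≤ δ / 2 →
        |(fun t => -g (1 - t)) s - (fun t => -g (1 - t)) t| ≤ b - a := by
      intro s hs t ht hst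
      have h0 := hgu (1 - s) (hmaps s hs) (1 - t) (hmaps t ht)
        (by rw [show (1 - s) - (1 - t) = -(s - t) by ring, abs_neg]; exact hst)
      calc |(fun t => -g (1 - t)) s - (fun t => -g (1 - t)) t|
          = |g (1 - s) - g (1 - t)| := by
            show |-g (1 - s) - -g (1 - t)| = _
            rw [show -g (1 - s) - -g (1 - t) = -(g (1 - s) - g (1 - t)) by ring, abs_neg]
        _ ≤ b - a := h0
    have hslope : b * ((1 - (y₀:ℝ)) - (1 - (x:ℝ))) <
        (fun t => F (1 - t)) (1 - (y₀:ℝ)) - (fun t => F (1 - t)) (1 - (x:ℝ)) := by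
      show _ < F (1 - (1 - (y₀:ℝ))) - F (1 - (1 - (x:ℝ)))
      rw [show (1:ℝ) - (1 - (y₀:ℝ)) = (y₀:ℝ) by ring, show (1:ℝ) - (1 - (x:ℝ)) = (x:ℝ) by ring,
        hFf, hFf]
      nlinarith [hlt]
    obtain ⟨u, hu1, hu2, hu3⟩ := core_lemma (fun t => F (1 - t)) (fun t => -g (1 - t))
      a b (δ/2) l ha hab hl hlr hFc4 hg4 hgu4
      (1 - (x:ℝ)) (1 - (y₀:ℝ)) (by linarith [x.2.2]) (by linarith [y₀.2.1])
      (by linarith) hslope (by linarith [x.2.1])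
    refine ⟨1 - u - l, ?_, ?_⟩
    · intro t ht
      constructor
      · have : (x:ℝ) - 2^(-a) ≤ t := by linarith [ht.1]
        linarith [hx]
      · have : t ≤ (x:ℝ) := by linarith [ht.2]
        linarith [x.2.2]
    · intro y hy
      have hy' : (1:ℝ) - (y:ℝ) ∈ Set.Ioo u (u + l) := by
        constructor
        · linarith [hy.2]
        · linarith [hy.1]
      have h3 := hu3 (1 - (y:ℝ)) hy'
      have h3' : a * ((1 - (y:ℝ)) - (1 - (x:ℝ))) < F (1 - (1 - (y:ℝ))) - F (1 - (1 - (x:ℝ))) := h3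
      rw [show (1:ℝ) - (1 - (y:ℝ)) = (y:ℝ) by ring, show (1:ℝ) - (1 - (x:ℝ)) = (x:ℝ) by ring,
        hFf, hFf] at h3'
      refine ⟨by linarith [hy.1], by linarith [hy.2], ?_⟩
      nlinarith [h3']

end
end

section
/- Let f ∈ C(I) and a > 0. Suppose φ is a bump function of height h > 0 and width w > 0 located at Ĥ and Ȟ, where Ĥ and Ȟ are disjoint finite subsets of I. Then, setting g = f + φ, one has Ĥ ∩ N̂(f,a) ⊂ N̂(g,a) and Ȟ ∩ Ň(f,a) ⊂ Ň(g,a). -/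
open Filter Topology TopologicalSpace Set MeasureTheory

noncomputable section

/-- Adding a bump function preserves membership of the located points:
`Ĥ ∩ N̂(f,a) ⊆ N̂(f+φ,a)` and `Ȟ ∩ Ň(f,a) ⊆ Ň(f+φ,a)`. -/
theorem bump_easy (f φ : C(UI, ℝ)) (a h w : ℝ) (ha : 0 < a) (hh : 0 < h) (hw : 0 < w)
    (H1 H2 : Set UI) (h1fin : H1.Finite) (h2fin : H2.Finite) (hdisj : Disjoint H1 H2)
    (hφ : IsBump φ h w H1 H2) :
    H1 ∩ Nhat ⇑f a ⊆ Nhat ⇑(f + φ) a ∧ H2 ∩ Ncheck ⇑f a ⊆ Ncheck ⇑(f + φ) a := by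
  obtain ⟨-, hnorm, hH1, hH2, -, -⟩ := hφ
  have hub : ∀ y : UI, φ y ≤ h := fun y => by
    have := φ.norm_coe_le_norm y
    have := abs_le.mp (hnorm ▸ this)
    exact this.2
  have hlb : ∀ y : UI, -h ≤ φ y := fun y => by
    have := φ.norm_coe_le_norm y
    have := abs_le.mp (hnorm ▸ this)
    exact this.1
  constructor
  · rintro x ⟨hxH, hx⟩
    have hdec : ∀ y : UI, φ y - φ x ≤ 0 := fun y => by
      have := hub y; rw [hH1 x hxH]; linarith
    rcases hx with hx | hx
    · left
      refine ⟨hx.1, fun y hy1 hy2 => ?_⟩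
      have := hx.2 y hy1 hy2
      have := hdec y
      simp only [ContinuousMap.add_apply]
      linarith
    · right
      refine ⟨hx.1, fun y hy1 hy2 => ?_⟩
      have := hx.2 y hy1 hy2
      have := hdec y
      simp only [ContinuousMap.add_apply]
      linarith
  · rintro x ⟨hxH, hx⟩
    have hinc : ∀ y : UI, 0 ≤ φ y - φ x := fun y => by
      have := hlb y; rw [hH2 x hxH]; linarith
    rcases hx with hx | hx
    · left
      refine ⟨hx.1, fun y hy1 hy2 => ?_⟩
      have := hx.2 y hy1 hy2
      have := hinc y
      simp only [ContinuousMap.add_apply]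
      linarith
    · right
      refine ⟨hx.1, fun y hy1 hy2 => ?_⟩
      have := hx.2 y hy1 hy2
      have := hinc y
      simp only [ContinuousMap.add_apply]
      linarith

end
end

section
/- Let X be a Baire topological space and let A be a subset of the countable product X^ℕ (with the product topology) that is invariant under finite permutations and has the Baire property. Then A is either meagre or residual (comeagre) in X^ℕ. -/
open Filter Topology TopologicalSpace Set MeasureTheory

noncomputable section

section ZeroOneAux

variable {α : Type*} [TopologicalSpace α]

lemma zo_isMeagre_union {s t : Set α} (hs : IsMeagre s) (ht : IsMeagre t) :
    IsMeagre (s ∪ t) := by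
  rw [IsMeagre, Set.compl_union]
  exact Filter.inter_mem hs ht

lemma zo_isNowhereDense_isMeagre {s : Set α} (h : IsNowhereDense s) : IsMeagre s := by
  rw [isMeagre_iff_countable_union_isNowhereDense]
  exact ⟨{s}, by simpa using h, Set.countable_singleton _, by simp⟩

lemma zo_isMeagre_exists_seq {s : Set α} (h : IsMeagre s) :
    ∃ N : ℕ → Set α, (∀ n, IsNowhereDense (N n)) ∧ s ⊆ ⋃ n, N n := by
  obtain ⟨S, hS, hSc, hsub⟩ := isMeagre_iff_countable_union_isNowhereDense.mp h
  rcases S.eq_empty_or_nonempty with rfl | hne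
  · exact ⟨fun _ => ∅, fun _ => isNowhereDense_empty, by simpa using hsub⟩
  · obtain ⟨f, hf⟩ := hSc.exists_eq_range hne
    refine ⟨f, fun n => hS _ (by rw [hf]; exact Set.mem_range_self n), ?_⟩
    rwa [hf, Set.sUnion_range] at hsub

/-- A form of the Banach category theorem: the union of all open sets in which `A` is
comeagre is itself a set in which `A` is comeagre. -/
lemma zo_banach (A : Set α) :
    IsMeagre ((⋃₀ {O : Set α | IsOpen O ∧ IsMeagre (O \ A)}) \ A) := by
  classical
  set 𝒰 : Set (Set α) := {O | IsOpen O ∧ IsMeagre (O \ A)} with h𝒰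
  set C : Set (Set (Set α)) :=
    {𝒱 | (∀ V ∈ 𝒱, IsOpen V ∧ V.Nonempty ∧ ∃ O ∈ 𝒰, V ⊆ O) ∧ 𝒱.PairwiseDisjoint id} with hC
  obtain ⟨𝒱, h𝒱max⟩ : ∃ 𝒱, Maximal (· ∈ C) 𝒱 := by
    refine zorn_subset C ?_
    intro c hc hchain
    refine ⟨⋃₀ c, ⟨?_, ?_⟩, fun s hs => Set.subset_sUnion_of_mem hs⟩
    · rintro V ⟨𝒲, h𝒲, hV⟩
      exact (hc h𝒲).1 V hV
    · rintro V ⟨𝒲, h𝒲, hVm⟩ V' ⟨𝒲', h𝒲', hVm'⟩ hne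
      rcases hchain.total h𝒲 h𝒲' with h | h
      · exact (hc h𝒲').2 (h hVm) hVm' hne
      · exact (hc h𝒲).2 hVm (h hVm') hne
  obtain ⟨h𝒱, h𝒱disj⟩ := h𝒱max.prop
  have hchoice : ∀ V : Set α, ∃ N : ℕ → Set α,
      (∀ n, IsNowhereDense (N n)) ∧ (V ∈ 𝒱 → V \ A ⊆ ⋃ n, N n) := by
    intro V
    by_cases hV : V ∈ 𝒱
    · obtain ⟨-, -, O, hO, hVO⟩ := h𝒱 V hV
      obtain ⟨N, hN, hsub⟩ := zo_isMeagre_exists_seq hO.2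
      exact ⟨N, hN, fun _ => (Set.diff_subset_diff_left hVO).trans hsub⟩
    · exact ⟨fun _ => ∅, fun _ => isNowhereDense_empty, fun h => absurd h hV⟩
  choose N hN1 hN2 using hchoice
  set W : Set α := ⋃₀ 𝒱 with hWdef
  have hWo : IsOpen W := isOpen_sUnion fun V hV => (h𝒱 V hV).1
  set M : ℕ → Set α := fun n => ⋃ V ∈ 𝒱, (N V n ∩ V) with hMdef
  have hMnd : ∀ n, IsNowhereDense (M n) := by
    intro n
    rw [IsNowhereDense, Set.eq_empty_iff_forall_notMem]
    intro x hx
    have hxc : x ∈ closure (M n) := interior_subset hx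
    obtain ⟨y, hyP, hyM⟩ := mem_closure_iff.mp hxc _ isOpen_interior hx
    obtain ⟨V, hyN, hV, hyV⟩ : ∃ V, y ∈ N V n ∧ V ∈ 𝒱 ∧ y ∈ V := by
      simpa [hMdef] using hyM
    have hP'o : IsOpen (interior (closure (M n)) ∩ V) :=
      isOpen_interior.inter (h𝒱 V hV).1
    have hsub1 : interior (closure (M n)) ∩ V ∩ M n ⊆ N V n := by
      rintro z ⟨⟨-, hzV⟩, hzM⟩
      obtain ⟨V', hzN', hV', hzV'⟩ : ∃ V', z ∈ N V' n ∧ V' ∈ 𝒱 ∧ z ∈ V' := by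
        simpa [hMdef] using hzM
      by_cases hVV : V' = V
      · exact hVV ▸ hzN'
      · exact absurd hzV (Set.disjoint_left.mp (h𝒱disj hV' hV hVV) hzV')
    have hsub2 : interior (closure (M n)) ∩ V ⊆ closure (N V n) := by
      intro z hz
      have h2 : z ∈ closure ((interior (closure (M n)) ∩ V) ∩ M n) :=
        hP'o.inter_closure ⟨hz, interior_subset hz.1⟩
      exact closure_mono hsub1 h2
    have hynd := hN1 V n
    rw [IsNowhereDense] at hynd
    have : y ∈ interior (closure (N V n)) :=
      mem_interior.mpr ⟨_, hsub2, hP'o, ⟨hyP, hyV⟩⟩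
    simp [hynd] at this
  have hWA : IsMeagre (W \ A) := by
    refine (isMeagre_iUnion fun n => zo_isNowhereDense_isMeagre (hMnd n)).mono ?_
    rintro x ⟨hxW, hxA⟩
    obtain ⟨V, hV, hxV⟩ := hxW
    obtain ⟨n, hn⟩ := Set.mem_iUnion.mp (hN2 V hV ⟨hxV, hxA⟩)
    exact Set.mem_iUnion.mpr ⟨n, Set.mem_biUnion hV ⟨hn, hxV⟩⟩
  have hUW : ⋃₀ 𝒰 ⊆ closure W := by
    intro x hx
    by_contra hxW
    obtain ⟨O, hO, hxO⟩ := hx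
    have hV'o : IsOpen (O ∩ (closure W)ᶜ) := hO.1.inter isClosed_closure.isOpen_compl
    have hC' : insert (O ∩ (closure W)ᶜ) 𝒱 ∈ C := by
      constructor
      · rintro V (rfl | hV)
        · exact ⟨hV'o, ⟨x, hxO, hxW⟩, O, hO, Set.inter_subset_left⟩
        · exact h𝒱 V hV
      · refine h𝒱disj.insert fun V hV _ => ?_
        refine Set.disjoint_left.mpr fun z hz1 hz2 => ?_
        exact hz1.2 (subset_closure (Set.mem_sUnion.mpr ⟨V, hV, hz2⟩))
    have hmem : (O ∩ (closure W)ᶜ) ∈ 𝒱 :=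
      h𝒱max.2 hC' (Set.subset_insert _ _) (Set.mem_insert _ _)
    exact hxW (subset_closure (Set.mem_sUnion.mpr ⟨_, hmem, hxO, hxW⟩))
  have hfr : IsMeagre (closure W \ W) := by
    have hcl : IsClosed (closure W \ W) := isClosed_closure.sdiff hWo
    have hnd : IsNowhereDense (closure W \ W) := by
      rw [hcl.isNowhereDense_iff, Set.eq_empty_iff_forall_notMem]
      intro x hx
      have h1 : interior (closure W \ W) ⊆ closure W :=
        interior_subset.trans Set.diff_subset
      have h2 : interior (closure W \ W) ∩ W = ∅ :=
        Set.eq_empty_of_subset_empty fun z hz => absurd hz.2 (interior_subset hz.1).2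
      have h3 : x ∈ closure (interior (closure W \ W) ∩ W) :=
        isOpen_interior.inter_closure ⟨hx, h1 hx⟩
      rw [h2, closure_empty] at h3
      exact h3
    exact zo_isNowhereDense_isMeagre hnd
  refine (zo_isMeagre_union hfr hWA).mono ?_
  rintro x ⟨hxU, hxA⟩
  by_cases hxW : x ∈ W
  · exact Or.inr ⟨hxW, hxA⟩
  · exact Or.inl ⟨hUW hxU, hxW⟩

end ZeroOneAux

/-- **Topological zero-one law.** A subset of `X^ℕ` (with `X` Baire) that is invariant
under finite permutations and has the Baire property is either meagre or residual. -/
theorem zero_one_law (X : Type*) [TopologicalSpace X] [BaireSpace X] (A : Set (ℕ → X))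
    (hinv : ∀ σ : Equiv.Perm ℕ, {n | σ n ≠ n}.Finite →
      ∀ x : ℕ → X, x ∈ A → (fun n => x (σ n)) ∈ A)
    (hA : BaireMeasurableSet A) :
    IsMeagre A ∨ A ∈ residual (ℕ → X) := by
  classical
  set 𝒰 : Set (Set (ℕ → X)) := {O | IsOpen O ∧ IsMeagre (O \ A)} with h𝒰def
  set U : Set (ℕ → X) := ⋃₀ 𝒰 with hUdef
  have hUo : IsOpen U := isOpen_sUnion fun O hO => hO.1
  have hUmA : IsMeagre (U \ A) := zo_banach A
  obtain ⟨V, hVo, hAV⟩ := hA.residualEq_isOpen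
  have hiff : {x : ℕ → X | x ∈ A ↔ x ∈ V} ∈ residual (ℕ → X) :=
    Filter.eventuallyEq_set.mp hAV
  have hVU : V ⊆ U := by
    apply Set.subset_sUnion_of_mem
    refine ⟨hVo, ?_⟩
    rw [IsMeagre]
    exact Filter.mem_of_superset hiff (fun x hx hx2 => hx2.2 (hx.mpr hx2.1))
  by_cases hU0 : U = ∅
  · left
    have hV0 : V = ∅ := Set.eq_empty_of_subset_empty (hU0 ▸ hVU)
    have hm : IsMeagre (A \ V) := by
      rw [IsMeagre]
      exact Filter.mem_of_superset hiff (fun x hx hx2 => hx2.2 (hx.mp hx2.1))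
    exact hm.mono (by simp [hV0])
  have hUdense : Dense U := by
    by_contra hnd
    -- a nonempty open set `o` disjoint from `U`
    obtain ⟨v, hv⟩ : ∃ v : ℕ → X, v ∉ closure U := by
      by_contra h; push_neg at h; exact hnd h
    rw [mem_closure_iff] at hv
    push_neg at hv
    obtain ⟨o, ho, hvo, hoU⟩ := hv
    -- a point of U, lying in some O ∈ 𝒰
    obtain ⟨w, hw⟩ : ∃ w, w ∈ U := Set.nonempty_iff_ne_empty.mpr hU0
    obtain ⟨O, hO, hwO⟩ := hw
    -- basic boxes
    obtain ⟨G, W, hGW, hGWU⟩ := isOpen_pi_iff.mp hO.1 w hwO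
    obtain ⟨F, Vs, hFV, hFVo⟩ := isOpen_pi_iff.mp ho v hvo
    set N : ℕ := max (G.sup id) (F.sup id) + 1 with hNdef
    have hGN : ∀ i ∈ G, i < N := fun i hi => by
      have : id i ≤ G.sup id := Finset.le_sup hi
      simp only [id] at this; omega
    have hFN : ∀ i ∈ F, i < N := fun i hi => by
      have : id i ≤ F.sup id := Finset.le_sup hi
      simp only [id] at this; omega
    -- the permutation
    set f : ℕ → ℕ := fun j => if j ∈ G then j + N else if N ≤ j ∧ j - N ∈ G then j - N else j
      with hfdef
    have hfG : ∀ j ∈ G, f j = j + N := fun j hj => by simp [hfdef, hj]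
    have hfGN : ∀ j ∈ G, f (j + N) = j := fun j hj => by
      have h1 : j + N ∉ G := fun h => by have := hGN _ h; omega
      have h2 : N ≤ j + N ∧ j + N - N ∈ G := ⟨by omega, by simpa using hj⟩
      simp only [hfdef, if_neg h1, if_pos h2]
      omega
    have hfelse : ∀ j, j ∉ G → ¬ (N ≤ j ∧ j - N ∈ G) → f j = j := fun j h1 h2 => by
      simp [hfdef, h1, h2]
    have finv : Function.Involutive f := by
      intro j
      by_cases h1 : j ∈ G
      · rw [hfG j h1, hfGN j h1]
      by_cases h2 : N ≤ j ∧ j - N ∈ G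
      · have : f j = j - N := by simp [hfdef, h1, h2]
        rw [this, hfG _ h2.2]
        omega
      · rw [hfelse j h1 h2, hfelse j h1 h2]
    set σ : Equiv.Perm ℕ := finv.toPerm f with hσdef
    have hσ : ∀ n, σ n = f n := fun n => rfl
    have hσsymm : ∀ n, σ.symm n = f n := fun n => rfl
    have hfin : {n | σ n ≠ n}.Finite := by
      refine Set.Finite.subset ((G.finite_toSet).union ((G.image (· + N)).finite_toSet)) ?_
      intro j hj
      simp only [Set.mem_setOf_eq, hσ] at hj
      by_cases h1 : j ∈ G
      · exact Or.inl h1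
      by_cases h2 : N ≤ j ∧ j - N ∈ G
      · right
        simp only [Finset.coe_image, Set.mem_image, Finset.mem_coe]
        exact ⟨j - N, h2.2, by omega⟩
      · exact absurd (hfelse j h1 h2) hj
    have hfinsymm : {n | σ.symm n ≠ n}.Finite := by
      refine hfin.subset ?_
      intro n hn
      simp only [Set.mem_setOf_eq, hσsymm] at hn
      simpa [hσ] using hn
    -- the homeomorphism
    let Φ : (ℕ → X) ≃ₜ (ℕ → X) :=
      { toFun := fun x n => x (σ n)
        invFun := fun x n => x (σ.symm n)
        left_inv := fun x => funext fun n => by simp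
        right_inv := fun x => funext fun n => by simp
        continuous_toFun := continuous_pi fun n => continuous_apply _
        continuous_invFun := continuous_pi fun n => continuous_apply _ }
    have hΦA : Φ ⁻¹' A = A := by
      apply Set.Subset.antisymm
      · intro x hx
        have h2 := hinv σ.symm hfinsymm (Φ x) hx
        have h3 : (fun n => Φ x (σ.symm n)) = x := funext fun n => by
          show x (σ (σ.symm n)) = x n
          rw [Equiv.apply_symm_apply]
        rwa [h3] at h2
      · intro x hx
        exact hinv σ hfin x hx
    -- the box B and its pulled-back copy
    have hBA : IsMeagre (((G : Set ℕ).pi W) \ A) :=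
      hO.2.mono (Set.diff_subset_diff_left hGWU)
    have hBopen : IsOpen ((G : Set ℕ).pi W) :=
      isOpen_set_pi G.finite_toSet fun i hi => (hGW i hi).1
    have hpre : IsMeagre ((Φ ⁻¹' ((G : Set ℕ).pi W)) \ A) := by
      have heq : (Φ ⁻¹' ((G : Set ℕ).pi W)) \ A = Φ ⁻¹' (((G : Set ℕ).pi W) \ A) := by
        rw [Set.preimage_diff, hΦA]
      rw [heq]
      exact hBA.preimage_of_isOpenMap Φ.continuous Φ.isOpenMap
    have hBU : Φ ⁻¹' ((G : Set ℕ).pi W) ⊆ U :=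
      Set.subset_sUnion_of_mem ⟨hBopen.preimage Φ.continuous, hpre⟩
    -- the witness point
    set z : ℕ → X := fun j => if j ∈ F then v j else w (σ j) with hzdef
    have hzo : z ∈ o := by
      apply hFVo
      intro j hj
      simp only [Finset.mem_coe] at hj
      simp only [hzdef, if_pos hj]
      exact (hFV j hj).2
    have hzB : z ∈ Φ ⁻¹' ((G : Set ℕ).pi W) := by
      intro i hi
      simp only [Finset.mem_coe] at hi
      show (if σ i ∈ F then v (σ i) else w (σ (σ i))) ∈ W i
      have h1 : σ i = i + N := by rw [hσ, hfG i hi]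
      have h2 : i + N ∉ F := fun h => by have := hFN _ h; omega
      rw [h1, if_neg h2]
      have h3 : σ (i + N) = i := by rw [hσ, hfGN i hi]
      rw [h3]
      exact (hGW i hi).2
    have : z ∈ o ∩ U := ⟨hzo, hBU hzB⟩
    rw [hoU] at this
    exact this
  right
  have hUres : U ∈ residual _ := residual_of_dense_open hUo hUdense
  rw [IsMeagre] at hUmA
  exact Filter.mem_of_superset (Filter.inter_mem hUres hUmA)
    (fun x hx => by_contra fun hxA => hx.2 ⟨hx.1, hxA⟩)

end
end

section
/- Let n ∈ Z, δ ∈ Y, k ≥ 0, and suppose K = (K_n) ∈ S_k(n,δ). Then for every j ∈ ℕ, one has ⋂_{m=j}^∞ ⋃_{n ∈ A_j^m(n^k)} B(K_n, δ_m) ⊂ ⋃_{n=1}^∞ K_n. -/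
open Filter Topology TopologicalSpace Set MeasureTheory

noncomputable section

lemma Aset_finite (n : ℕ → ℕ) (j m : ℕ) : (Aset n j m).Finite :=
  (Set.finite_Icc _ _).union
    ((Set.finite_Ico _ _).biUnion fun _ _ => Set.finite_Icc _ _)

lemma Aset_one_le (n : ℕ → ℕ) (j m : ℕ) : ∀ i ∈ Aset n j m, 1 ≤ i := by
  intro i hi
  rcases hi with h | h
  · exact h.1
  · simp only [Set.mem_iUnion, Set.mem_Icc] at h
    obtain ⟨i₀, _, h⟩ := h
    omega

lemma Aset_mono (n : ℕ → ℕ) (j : ℕ) {m m' : ℕ} (h : m ≤ m') :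
    Aset n j m ⊆ Aset n j m' := by
  apply Set.union_subset_union_right
  apply Set.biUnion_mono (Set.Ico_subset_Ico_right h) (fun _ _ => le_rfl)

lemma memY_anti {δ : ℕ → ℝ} (hδ : memY δ) {a b : ℕ} (ha : 1 ≤ a) (hab : a ≤ b) :
    δ b ≤ δ a := by
  induction b, hab using Nat.le_induction with
  | base => exact le_rfl
  | succ b hb ih => exact le_trans (le_of_lt (hδ.2.1 b (le_trans ha hb))) ih

lemma memY_eventually_small {δ : ℕ → ℝ} (hδ : memY δ) {ε : ℝ} (hε : 0 < ε) :
    ∃ N, ∀ m, N ≤ m → δ m < ε := by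
  have := (hδ.2.2.eventually_lt_const hε).exists_forall_of_atTop
  obtain ⟨N, hN⟩ := this
  exact ⟨N, hN⟩

/-- If `x` can be approximated arbitrarily well by points of `K i` for `i` in a fixed
finite set `A`, then `x` lies in some `K i`, `i ∈ A`. -/
lemma closed_case (K : ℕ → KSp) (A : Set ℕ) (hA : A.Finite)
    (hA1 : ∀ i ∈ A, 1 ≤ i) (x : UI)
    (h : ∀ ε > (0:ℝ), ∃ i ∈ A, ∃ y ∈ (K i : Set UI), dist x y < ε) :
    ∃ i, 1 ≤ i ∧ x ∈ (K i : Set UI) := by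
  have hcl : IsClosed (⋃ i ∈ A, (K i : Set UI)) :=
    hA.isClosed_biUnion fun i _ => (K i).isClosed
  have hx : x ∈ closure (⋃ i ∈ A, (K i : Set UI)) := by
    rw [Metric.mem_closure_iff]
    intro ε hε
    obtain ⟨i, hi, y, hy, hxy⟩ := h ε hε
    exact ⟨y, Set.mem_biUnion hi hy, hxy⟩
  rw [hcl.closure_eq] at hx
  obtain ⟨i, hi, hxi⟩ := Set.mem_iUnion₂.1 hx
  exact ⟨i, hA1 i hi, hxi⟩

/-- Main induction: approximate membership at every scale and every level implies
actual membership in some `K i`. -/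
lemma approx_mem (n' : ℕ → ℕ) (δ : ℕ → ℝ) (hδ : memY δ) (K : ℕ → KSp)
    (hS : ∀ j m, 2 ≤ j → j + 1 ≤ m →
      (⋃ i ∈ Aset n' j m \ Aset n' j (m - 1), (K i : Set UI))
        ⊆ ⋃ i ∈ Aset n' (j - 1) (m - 1), nbhd (K i : Set UI) (δ m)) :
    ∀ j, 1 ≤ j → ∀ x : UI,
      (∀ ε > (0:ℝ), ∀ M : ℕ, ∃ m, M ≤ m ∧ ∃ i ∈ Aset n' j m,
        ∃ y ∈ (K i : Set UI), dist x y < ε) →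
      ∃ i, 1 ≤ i ∧ x ∈ (K i : Set UI) := by
  intro j
  induction j with
  | zero => exact fun h => absurd h (by omega)
  | succ j ih =>
    intro _ x H
    by_cases hj0 : j = 0
    · -- base case `j + 1 = 1`: the index sets are all `Icc 1 (n' 1)`.
      subst hj0
      apply closed_case K (Set.Icc 1 (n' 1)) (Set.finite_Icc _ _) (fun i hi => hi.1) x
      intro ε hε
      obtain ⟨m, _, i, hi, y, hy, hxy⟩ := H ε hε 0
      refine ⟨i, ?_, y, hy, hxy⟩
      rcases hi with h | h
      · exact h
      · simp only [Set.mem_iUnion] at h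
        obtain ⟨i₀, _, h⟩ := h
        simp only [Nat.add_sub_cancel, Set.mem_Icc] at h
        omega
    · have hj1 : 1 ≤ j := by omega
      by_cases hA : ∃ M₀, ∀ ε > (0:ℝ), ∃ i ∈ Aset n' (j + 1) M₀,
          ∃ y ∈ (K i : Set UI), dist x y < ε
      · obtain ⟨M₀, hM₀⟩ := hA
        exact closed_case K _ (Aset_finite n' (j + 1) M₀) (Aset_one_le n' (j + 1) M₀) x hM₀
      · push_neg at hA
        apply ih hj1 x
        intro ε hε M
        obtain ⟨N, hN⟩ := memY_eventually_small hδ (half_pos hε)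
        set M' := max N (max (M + 1) (j + 1)) with hM'def
        obtain ⟨η, hη, hηbig⟩ := hA M'
        obtain ⟨m, _, i, hi, y, hy, hxy⟩ := H (min η (ε / 2)) (lt_min hη (half_pos hε)) 0
        have hxyη : dist x y < η := lt_of_lt_of_le hxy (min_le_left _ _)
        have hiM' : i ∉ Aset n' (j + 1) M' := fun hmem =>
          absurd hxyη (not_lt.2 (hηbig i hmem y hy))
        have hex : ∃ m', i ∈ Aset n' (j + 1) m' := ⟨m, hi⟩
        classical
        set m₁ := Nat.find hex with hm₁def
        have hm₁mem : i ∈ Aset n' (j + 1) m₁ := Nat.find_spec hex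
        have hm₁gt : M' < m₁ := by
          by_contra hle
          push_neg at hle
          exact hiM' (Aset_mono n' (j + 1) hle hm₁mem)
        have hM'ge : j + 1 ≤ M' := le_max_of_le_right (le_max_right _ _)
        have hm₁pred : i ∉ Aset n' (j + 1) (m₁ - 1) :=
          Nat.find_min hex (by omega)
        have hy' : y ∈ ⋃ i' ∈ Aset n' ((j + 1) - 1) (m₁ - 1), nbhd (K i' : Set UI) (δ m₁) := by
          apply hS (j + 1) m₁ (by omega) (by omega)
          exact Set.mem_biUnion ⟨hm₁mem, hm₁pred⟩ hy
        simp only [Nat.add_sub_cancel, Set.mem_iUnion] at hy'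
        obtain ⟨i', hi', hynb⟩ := hy'
        obtain ⟨z, hz, hyz⟩ := by
          simpa only [nbhd, Set.mem_iUnion, Metric.mem_ball, dist_comm] using hynb
        refine ⟨m₁ - 1, by omega, i', hi', z, hz, ?_⟩
        have hδm₁ : δ m₁ < ε / 2 := hN m₁ (by omega)
        calc dist x z ≤ dist x y + dist y z := dist_triangle x y z
          _ < ε / 2 + ε / 2 := by
              have : dist x y < ε / 2 := lt_of_lt_of_le hxy (min_le_right _ _)
              linarith
          _ = ε := add_halves ε

/-- If `K ∈ 𝒮_k(n,δ)`, then
`⋂_{m≥j} ⋃_{i ∈ A_j^m(n^k)} B(K_i, δ_m) ⊆ ⋃_{i≥1} K_i` for every `j ≥ 1`. -/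
theorem inter_nbhd_subset_iUnion (n : ℕ → ℕ) (hn : memZ n) (δ : ℕ → ℝ) (hδ : memY δ)
    (k : ℕ) (K : ℕ → KSp) (hK : memS K n δ k) (j : ℕ) (hj : 1 ≤ j) :
    (⋂ m ∈ Set.Ici j, ⋃ i ∈ Aset (shiftSeq n k) j m, nbhd (K i : Set UI) (δ m))
      ⊆ ⋃ i ∈ Set.Ici 1, (K i : Set UI) := by
  intro x hx
  have H : ∀ ε > (0:ℝ), ∀ M : ℕ, ∃ m, M ≤ m ∧ ∃ i ∈ Aset (shiftSeq n k) j m,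
      ∃ y ∈ (K i : Set UI), dist x y < ε := by
    intro ε hε M
    obtain ⟨N, hN⟩ := memY_eventually_small hδ hε
    set m := max j (max M N) with hm
    have hxm : x ∈ ⋃ i ∈ Aset (shiftSeq n k) j m, nbhd (K i : Set UI) (δ m) := by
      have := Set.mem_iInter₂.1 hx m (by rw [Set.mem_Ici, hm]; exact le_max_left _ _)
      exact this
    simp only [Set.mem_iUnion] at hxm
    obtain ⟨i, hi, hxnb⟩ := hxm
    obtain ⟨y, hy, hxy⟩ := by
      simpa only [nbhd, Set.mem_iUnion, Metric.mem_ball] using hxnb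
    refine ⟨m, le_max_of_le_right (le_max_left _ _), i, hi, y, hy, ?_⟩
    exact lt_trans hxy (hN m (le_max_of_le_right (le_max_right _ _)))
  obtain ⟨i, hi1, hxi⟩ := approx_mem (shiftSeq n k) δ hδ K hK j hj x H
  exact Set.mem_biUnion hi1 hxi

end
end

section
/- If (K, f) ∈ 𝒳, then ⋃_{n=1}^∞ K_n = N(f), i.e. the union of the sequence of closed sets K equals the set of non-knot points of f. -/
open Filter Topology TopologicalSpace Set MeasureTheory

noncomputable section

lemma two_rpow_pos (a : ℝ) : (0:ℝ) < 2^(-a) := Real.rpow_pos_of_pos two_pos _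

lemma mem_nplusUp_diniSupR {f : UI → ℝ} {a : ℝ} {x : UI} (hx : x ∈ NplusUp f a) :
    DiniSupR f x ≤ (a : EReal) := by
  apply Filter.limsup_le_of_le (by isBoundedDefault)
  have hc : {y : UI | (y:ℝ) < (x:ℝ) + 2^(-a)} ∈ 𝓝 x := by
    refine (isOpen_lt continuous_subtype_val continuous_const).mem_nhds ?_
    simpa using two_rpow_pos a
  filter_upwards [self_mem_nhdsWithin, mem_nhdsWithin_of_mem_nhds hc] with y hy hy2
  have hxy : (x:ℝ) < (y:ℝ) := Subtype.coe_lt_coe.mpr hy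
  have h1 : f y - f x ≤ a * ((y:ℝ) - (x:ℝ)) := hx.2 y hxy.le hy2.le
  have : (f y - f x) / ((y:ℝ) - (x:ℝ)) ≤ a := by
    rw [div_le_iff₀ (by linarith)]; linarith
  rw [← EReal.coe_sub, ← EReal.coe_sub, ← EReal.coe_div]; exact_mod_cast this

lemma mem_nplusLow_diniInfR {f : UI → ℝ} {a : ℝ} {x : UI} (hx : x ∈ NplusLow f a) :
    ((-a : ℝ) : EReal) ≤ DiniInfR f x := by
  apply Filter.le_liminf_of_le (by isBoundedDefault)
  have hc : {y : UI | (y:ℝ) < (x:ℝ) + 2^(-a)} ∈ 𝓝 x := by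
    refine (isOpen_lt continuous_subtype_val continuous_const).mem_nhds ?_
    simpa using two_rpow_pos a
  filter_upwards [self_mem_nhdsWithin, mem_nhdsWithin_of_mem_nhds hc] with y hy hy2
  have hxy : (x:ℝ) < (y:ℝ) := Subtype.coe_lt_coe.mpr hy
  have h1 : -a * ((y:ℝ) - (x:ℝ)) ≤ f y - f x := hx.2 y hxy.le hy2.le
  have : (-a : ℝ) ≤ (f y - f x) / ((y:ℝ) - (x:ℝ)) := by
    rw [le_div_iff₀ (by linarith)]; linarith
  rw [← EReal.coe_sub, ← EReal.coe_sub, ← EReal.coe_div]; exact_mod_cast this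

lemma mem_nminusUp_diniSupL {f : UI → ℝ} {a : ℝ} {x : UI} (hx : x ∈ NminusUp f a) :
    DiniSupL f x ≤ (a : EReal) := by
  apply Filter.limsup_le_of_le (by isBoundedDefault)
  have hc : {y : UI | (x:ℝ) - 2^(-a) < (y:ℝ)} ∈ 𝓝 x := by
    refine (isOpen_lt continuous_const continuous_subtype_val).mem_nhds ?_
    simpa using two_rpow_pos a
  filter_upwards [self_mem_nhdsWithin, mem_nhdsWithin_of_mem_nhds hc] with y hy hy2
  have hxy : (y:ℝ) < (x:ℝ) := Subtype.coe_lt_coe.mpr hy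
  have h1 : a * ((y:ℝ) - (x:ℝ)) ≤ f y - f x := hx.2 y hy2.le hxy.le
  have : (f y - f x) / ((y:ℝ) - (x:ℝ)) ≤ a := by
    rw [div_le_iff_of_neg (by linarith)]; linarith
  rw [← EReal.coe_sub, ← EReal.coe_sub, ← EReal.coe_div]; exact_mod_cast this

lemma mem_nminusLow_diniInfL {f : UI → ℝ} {a : ℝ} {x : UI} (hx : x ∈ NminusLow f a) :
    ((-a : ℝ) : EReal) ≤ DiniInfL f x := by
  apply Filter.le_liminf_of_le (by isBoundedDefault)
  have hc : {y : UI | (x:ℝ) - 2^(-a) < (y:ℝ)} ∈ 𝓝 x := by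
    refine (isOpen_lt continuous_const continuous_subtype_val).mem_nhds ?_
    simpa using two_rpow_pos a
  filter_upwards [self_mem_nhdsWithin, mem_nhdsWithin_of_mem_nhds hc] with y hy hy2
  have hxy : (y:ℝ) < (x:ℝ) := Subtype.coe_lt_coe.mpr hy
  have h1 : f y - f x ≤ -a * ((y:ℝ) - (x:ℝ)) := hx.2 y hy2.le hxy.le
  have : (-a:ℝ) ≤ (f y - f x) / ((y:ℝ) - (x:ℝ)) := by
    rw [le_div_iff_of_neg (by linarith)]; linarith
  rw [← EReal.coe_sub, ← EReal.coe_sub, ← EReal.coe_div]; exact_mod_cast this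

lemma NN_subset_nonKnot (f : UI → ℝ) (a : ℝ) : NN f a ⊆ NonKnot f := by
  intro x hx
  have hpos := two_rpow_pos a
  intro hknot
  have hup : x ∈ NplusUp f a ∨ x ∈ NplusLow f a → (x:ℝ) ≤ 1 - 2^(-a) := by
    rintro (h | h) <;> exact h.1
  have hdn : x ∈ NminusUp f a ∨ x ∈ NminusLow f a → 2^(-a) ≤ (x:ℝ) := by
    rintro (h | h) <;> exact h.1
  rcases hknot with ⟨_, _, hSR, hSL, hIR, hIL⟩ | ⟨hx0, hSR, hIR⟩ | ⟨hx1, hSL, hIL⟩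
  · rcases hx with (h | h) | (h | h)
    · exact absurd (hSR ▸ mem_nplusUp_diniSupR h) (by simp [EReal.coe_lt_top])
    · exact absurd (hIL ▸ mem_nminusLow_diniInfL h) (by simp)
    · exact absurd (hIR ▸ mem_nplusLow_diniInfR h) (by simp)
    · exact absurd (hSL ▸ mem_nminusUp_diniSupL h) (by simp [EReal.coe_lt_top])
  · rcases hx with (h | h) | (h | h)
    · exact absurd (hSR ▸ mem_nplusUp_diniSupR h) (by simp [EReal.coe_lt_top])
    · have := hdn (Or.inr h); linarith [hx0 ▸ this]
    · exact absurd (hIR ▸ mem_nplusLow_diniInfR h) (by simp)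
    · have := hdn (Or.inl h); linarith [hx0 ▸ this]
  · rcases hx with (h | h) | (h | h)
    · have := hup (Or.inl h); linarith [hx1 ▸ this]
    · exact absurd (hIL ▸ mem_nminusLow_diniInfL h) (by simp)
    · have := hup (Or.inr h); linarith [hx1 ▸ this]
    · exact absurd (hSL ▸ mem_nminusUp_diniSupL h) (by simp [EReal.coe_lt_top])

lemma isClosed_nplusLow {f : UI → ℝ} (hf : Continuous f) (a : ℝ) :
    IsClosed (NplusLow f a) := by
  have hc := two_rpow_pos a
  apply IsSeqClosed.isClosed
  intro u x hu hux
  have huc : Tendsto (fun n => ((u n : ℝ))) atTop (𝓝 (x:ℝ)) := tendsto_subtype_rng.mp hux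
  constructor
  · have hev : ∀ᶠ n in (atTop : Filter ℕ), ((u n : ℝ)) ≤ 1 - 2^(-a) :=
      Filter.Eventually.of_forall fun n => (hu n).1
    exact le_of_tendsto huc hev
  · intro y hy1 hy2
    have hw : ∀ n : ℕ, max ((u n : ℝ)) (min (y:ℝ) ((u n : ℝ) + 2^(-a))) ∈ Set.Icc (0:ℝ) 1 := by
      intro n
      constructor
      · exact le_max_of_le_left (u n).2.1
      · exact max_le (u n).2.2 (le_trans (min_le_left _ _) y.2.2)
    set w : ℕ → UI := fun n => ⟨_, hw n⟩ with hwdef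
    have hwc : Tendsto (fun n => ((w n : ℝ))) atTop
        (𝓝 (max (x:ℝ) (min (y:ℝ) ((x:ℝ) + 2^(-a))))) :=
      huc.max (tendsto_const_nhds.min (huc.add_const _))
    have hval : max (x:ℝ) (min (y:ℝ) ((x:ℝ) + 2^(-a))) = (y:ℝ) := by
      rw [min_eq_left hy2, max_eq_right hy1]
    rw [hval] at hwc
    have hwt : Tendsto w atTop (𝓝 y) := tendsto_subtype_rng.mpr hwc
    have hineq : ∀ n, -a * ((w n : ℝ) - (u n : ℝ)) ≤ f (w n) - f (u n) := by
      intro n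
      refine (hu n).2 (w n) (le_max_left _ _) ?_
      exact max_le (by linarith) (min_le_right _ _)
    exact le_of_tendsto_of_tendsto' ((hwc.sub huc).const_mul (-a))
      (((hf.tendsto y).comp hwt).sub ((hf.tendsto x).comp hux)) hineq

lemma isClosed_nminusUp {f : UI → ℝ} (hf : Continuous f) (a : ℝ) :
    IsClosed (NminusUp f a) := by
  have hc := two_rpow_pos a
  apply IsSeqClosed.isClosed
  intro u x hu hux
  have huc : Tendsto (fun n => ((u n : ℝ))) atTop (𝓝 (x:ℝ)) := tendsto_subtype_rng.mp hux
  constructor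
  · have hev : ∀ᶠ n in (atTop : Filter ℕ), 2^(-a) ≤ ((u n : ℝ)) :=
      Filter.Eventually.of_forall fun n => (hu n).1
    exact ge_of_tendsto huc hev
  · intro y hy1 hy2
    have hw : ∀ n : ℕ, min ((u n : ℝ)) (max (y:ℝ) ((u n : ℝ) - 2^(-a))) ∈ Set.Icc (0:ℝ) 1 := by
      intro n
      constructor
      · exact le_min (u n).2.1 (le_max_of_le_left y.2.1)
      · exact min_le_of_left_le (u n).2.2
    set w : ℕ → UI := fun n => ⟨_, hw n⟩ with hwdef
    have hwc : Tendsto (fun n => ((w n : ℝ))) atTop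
        (𝓝 (min (x:ℝ) (max (y:ℝ) ((x:ℝ) - 2^(-a))))) :=
      huc.min (tendsto_const_nhds.max (huc.sub_const _))
    have hval : min (x:ℝ) (max (y:ℝ) ((x:ℝ) - 2^(-a))) = (y:ℝ) := by
      rw [max_eq_left hy1, min_eq_right hy2]
    rw [hval] at hwc
    have hwt : Tendsto w atTop (𝓝 y) := tendsto_subtype_rng.mpr hwc
    have hineq : ∀ n, a * ((w n : ℝ) - (u n : ℝ)) ≤ f (w n) - f (u n) := by
      intro n
      refine (hu n).2 (w n) ?_ (min_le_left _ _)
      exact le_min (by linarith) (le_max_right _ _)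
    exact le_of_tendsto_of_tendsto' ((hwc.sub huc).const_mul a)
      (((hf.tendsto y).comp hwt).sub ((hf.tendsto x).comp hux)) hineq

lemma nplusUp_eq_neg (f : UI → ℝ) (a : ℝ) :
    NplusUp f a = NplusLow (fun t => -(f t)) a := by
  ext x
  constructor
  · rintro ⟨h1, h2⟩
    exact ⟨h1, fun y hy1 hy2 => by have := h2 y hy1 hy2; simp only []; linarith⟩
  · rintro ⟨h1, h2⟩
    exact ⟨h1, fun y hy1 hy2 => by have := h2 y hy1 hy2; simp only [] at this; linarith⟩

lemma nminusLow_eq_neg (f : UI → ℝ) (a : ℝ) :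
    NminusLow f a = NminusUp (fun t => -(f t)) a := by
  ext x
  constructor
  · rintro ⟨h1, h2⟩
    exact ⟨h1, fun y hy1 hy2 => by have := h2 y hy1 hy2; simp only []; linarith⟩
  · rintro ⟨h1, h2⟩
    exact ⟨h1, fun y hy1 hy2 => by have := h2 y hy1 hy2; simp only [] at this; linarith⟩

lemma isClosed_NN {f : UI → ℝ} (hf : Continuous f) (a : ℝ) : IsClosed (NN f a) := by
  have h1 : IsClosed (NplusUp f a) := by
    rw [nplusUp_eq_neg]; exact isClosed_nplusLow hf.neg a
  have h2 : IsClosed (NminusLow f a) := by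
    rw [nminusLow_eq_neg]; exact isClosed_nminusUp hf.neg a
  exact (h1.union h2).union ((isClosed_nplusLow hf a).union (isClosed_nminusUp hf a))

lemma rpow_neg_lt_of {t s : ℝ} (ht : 0 < t) (hs : -Real.logb 2 t < s) : (2:ℝ)^(-s) < t := by
  have h := (Real.rpow_lt_rpow_left_iff (one_lt_two)).mpr (show -s < Real.logb 2 t by linarith)
  rwa [Real.rpow_logb two_pos (by norm_num) ht] at h

lemma exists_big_j {a : ℕ → ℝ} (ha : memX a) (M : ℝ) : ∃ j, 1 ≤ j ∧ M < a j := by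
  obtain ⟨j, h1, h2⟩ := ((ha.2.2.eventually_gt_atTop M).and (eventually_ge_atTop 1)).exists
  exact ⟨j, h2, h1⟩

lemma ereal_div_lt_real {p q c : ℝ} (h : ((p:ℝ):EReal) / ((q:ℝ):EReal) < (c:EReal)) :
    p / q < c := by
  rw [← EReal.coe_div] at h
  exact_mod_cast h

lemma real_lt_ereal_div {p q c : ℝ} (h : (c:EReal) < ((p:ℝ):EReal) / ((q:ℝ):EReal)) :
    c < p / q := by
  rw [← EReal.coe_div] at h
  exact_mod_cast h

lemma dini_quot_eq (f : UI → ℝ) (x y : UI) :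
    ((f y : EReal) - (f x : EReal)) / (((y:ℝ) : EReal) - ((x:ℝ) : EReal))
      = (((f y - f x : ℝ)) : EReal) / (((((y:ℝ) - (x:ℝ)) : ℝ)) : EReal) := by
  rw [EReal.coe_sub, EReal.coe_sub]

lemma exists_mem_nplusUp {f : UI → ℝ} {x : UI} {a : ℕ → ℝ} (ha : memX a)
    (hx1 : (x:ℝ) < 1) (hD : DiniSupR f x ≠ ⊤) : ∃ j, 1 ≤ j ∧ x ∈ NplusUp f (a j) := by
  obtain ⟨c, hc1, -⟩ := EReal.lt_iff_exists_real_btwn.mp (lt_top_iff_ne_top.mpr hD)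
  have hev := Filter.eventually_lt_of_limsup_lt hc1
  obtain ⟨ε, hε, hball⟩ := Metric.mem_nhdsWithin_iff.mp hev
  set t := min ε (1 - (x:ℝ)) with htdef
  have ht : 0 < t := lt_min hε (by linarith)
  obtain ⟨j, hj1, hj2⟩ := exists_big_j ha (max c (-Real.logb 2 t))
  have hcj : c < a j := lt_of_le_of_lt (le_max_left _ _) hj2
  have hpow : (2:ℝ)^(-(a j)) < t := rpow_neg_lt_of ht (lt_of_le_of_lt (le_max_right _ _) hj2)
  refine ⟨j, hj1, ?_, ?_⟩
  · have := min_le_right ε (1 - (x:ℝ)); linarith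
  · intro y hy1 hy2
    rcases eq_or_lt_of_le hy1 with heq | hlt
    · have : y = x := Subtype.ext heq.symm
      subst this; simp
    · have hdist : dist y x < ε := by
        rw [Subtype.dist_eq, Real.dist_eq, abs_of_pos (by linarith)]
        have := min_le_left ε (1 - (x:ℝ)); linarith
      have hmem := hball ⟨hdist, hlt⟩
      rw [Set.mem_setOf_eq, dini_quot_eq] at hmem
      have hq : (f y - f x) / ((y:ℝ) - (x:ℝ)) < c := ereal_div_lt_real hmem
      rw [div_lt_iff₀ (by linarith)] at hq
      nlinarith

lemma exists_mem_nplusLow {f : UI → ℝ} {x : UI} {a : ℕ → ℝ} (ha : memX a)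
    (hx1 : (x:ℝ) < 1) (hD : DiniInfR f x ≠ ⊥) : ∃ j, 1 ≤ j ∧ x ∈ NplusLow f (a j) := by
  obtain ⟨c, -, hc1⟩ := EReal.lt_iff_exists_real_btwn.mp (bot_lt_iff_ne_bot.mpr hD)
  have hev := Filter.eventually_lt_of_lt_liminf hc1
  obtain ⟨ε, hε, hball⟩ := Metric.mem_nhdsWithin_iff.mp hev
  set t := min ε (1 - (x:ℝ)) with htdef
  have ht : 0 < t := lt_min hε (by linarith)
  obtain ⟨j, hj1, hj2⟩ := exists_big_j ha (max (-c) (-Real.logb 2 t))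
  have hcj : -c < a j := lt_of_le_of_lt (le_max_left _ _) hj2
  have hpow : (2:ℝ)^(-(a j)) < t := rpow_neg_lt_of ht (lt_of_le_of_lt (le_max_right _ _) hj2)
  refine ⟨j, hj1, ?_, ?_⟩
  · have := min_le_right ε (1 - (x:ℝ)); linarith
  · intro y hy1 hy2
    rcases eq_or_lt_of_le hy1 with heq | hlt
    · have : y = x := Subtype.ext heq.symm
      subst this; simp
    · have hdist : dist y x < ε := by
        rw [Subtype.dist_eq, Real.dist_eq, abs_of_pos (by linarith)]
        have := min_le_left ε (1 - (x:ℝ)); linarith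
      have hmem := hball ⟨hdist, hlt⟩
      rw [Set.mem_setOf_eq, dini_quot_eq] at hmem
      have hq : c < (f y - f x) / ((y:ℝ) - (x:ℝ)) := real_lt_ereal_div hmem
      rw [lt_div_iff₀ (by linarith)] at hq
      nlinarith

lemma exists_mem_nminusUp {f : UI → ℝ} {x : UI} {a : ℕ → ℝ} (ha : memX a)
    (hx0 : 0 < (x:ℝ)) (hD : DiniSupL f x ≠ ⊤) : ∃ j, 1 ≤ j ∧ x ∈ NminusUp f (a j) := by
  obtain ⟨c, hc1, -⟩ := EReal.lt_iff_exists_real_btwn.mp (lt_top_iff_ne_top.mpr hD)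
  have hev := Filter.eventually_lt_of_limsup_lt hc1
  obtain ⟨ε, hε, hball⟩ := Metric.mem_nhdsWithin_iff.mp hev
  set t := min ε (x:ℝ) with htdef
  have ht : 0 < t := lt_min hε hx0
  obtain ⟨j, hj1, hj2⟩ := exists_big_j ha (max c (-Real.logb 2 t))
  have hcj : c < a j := lt_of_le_of_lt (le_max_left _ _) hj2
  have hpow : (2:ℝ)^(-(a j)) < t := rpow_neg_lt_of ht (lt_of_le_of_lt (le_max_right _ _) hj2)
  refine ⟨j, hj1, ?_, ?_⟩
  · have := min_le_right ε (x:ℝ); linarith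
  · intro y hy1 hy2
    rcases eq_or_lt_of_le hy2 with heq | hlt
    · have : y = x := Subtype.ext heq
      subst this; simp
    · have hdist : dist y x < ε := by
        rw [Subtype.dist_eq, Real.dist_eq, abs_of_neg (by linarith)]
        have := min_le_left ε (x:ℝ); linarith
      have hmem := hball ⟨hdist, hlt⟩
      rw [Set.mem_setOf_eq, dini_quot_eq] at hmem
      have hq : (f y - f x) / ((y:ℝ) - (x:ℝ)) < c := ereal_div_lt_real hmem
      rw [div_lt_iff_of_neg (by linarith)] at hq
      nlinarith

lemma exists_mem_nminusLow {f : UI → ℝ} {x : UI} {a : ℕ → ℝ} (ha : memX a)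
    (hx0 : 0 < (x:ℝ)) (hD : DiniInfL f x ≠ ⊥) : ∃ j, 1 ≤ j ∧ x ∈ NminusLow f (a j) := by
  obtain ⟨c, -, hc1⟩ := EReal.lt_iff_exists_real_btwn.mp (bot_lt_iff_ne_bot.mpr hD)
  have hev := Filter.eventually_lt_of_lt_liminf hc1
  obtain ⟨ε, hε, hball⟩ := Metric.mem_nhdsWithin_iff.mp hev
  set t := min ε (x:ℝ) with htdef
  have ht : 0 < t := lt_min hε hx0
  obtain ⟨j, hj1, hj2⟩ := exists_big_j ha (max (-c) (-Real.logb 2 t))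
  have hcj : -c < a j := lt_of_le_of_lt (le_max_left _ _) hj2
  have hpow : (2:ℝ)^(-(a j)) < t := rpow_neg_lt_of ht (lt_of_le_of_lt (le_max_right _ _) hj2)
  refine ⟨j, hj1, ?_, ?_⟩
  · have := min_le_right ε (x:ℝ); linarith
  · intro y hy1 hy2
    rcases eq_or_lt_of_le hy2 with heq | hlt
    · have : y = x := Subtype.ext heq
      subst this; simp
    · have hdist : dist y x < ε := by
        rw [Subtype.dist_eq, Real.dist_eq, abs_of_neg (by linarith)]
        have := min_le_left ε (x:ℝ); linarith
      have hmem := hball ⟨hdist, hlt⟩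
      rw [Set.mem_setOf_eq, dini_quot_eq] at hmem
      have hq : c < (f y - f x) / ((y:ℝ) - (x:ℝ)) := real_lt_ereal_div hmem
      rw [lt_div_iff_of_neg (by linarith)] at hq
      nlinarith

lemma nonKnot_exists_NN {f : UI → ℝ} {a : ℕ → ℝ} (ha : memX a) {x : UI}
    (hx : x ∈ NonKnot f) : ∃ j, 1 ≤ j ∧ x ∈ NN f (a j) := by
  by_cases hx0 : (x:ℝ) = 0
  · have hx1 : (x:ℝ) < 1 := by rw [hx0]; norm_num
    have h2 : ¬ (DiniSupR f x = ⊤ ∧ DiniInfR f x = ⊥) := by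
      intro hcon
      exact hx (Or.inr (Or.inl ⟨hx0, hcon.1, hcon.2⟩))
    rcases not_and_or.mp h2 with h | h
    · obtain ⟨j, hj, hm⟩ := exists_mem_nplusUp ha hx1 h
      exact ⟨j, hj, Or.inl (Or.inl hm)⟩
    · obtain ⟨j, hj, hm⟩ := exists_mem_nplusLow ha hx1 h
      exact ⟨j, hj, Or.inr (Or.inl hm)⟩
  by_cases hx1 : (x:ℝ) = 1
  · have hx0' : 0 < (x:ℝ) := by rw [hx1]; norm_num
    have h2 : ¬ (DiniSupL f x = ⊤ ∧ DiniInfL f x = ⊥) := by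
      intro hcon
      exact hx (Or.inr (Or.inr ⟨hx1, hcon.1, hcon.2⟩))
    rcases not_and_or.mp h2 with h | h
    · obtain ⟨j, hj, hm⟩ := exists_mem_nminusUp ha hx0' h
      exact ⟨j, hj, Or.inr (Or.inr hm)⟩
    · obtain ⟨j, hj, hm⟩ := exists_mem_nminusLow ha hx0' h
      exact ⟨j, hj, Or.inl (Or.inr hm)⟩
  have hx0' : 0 < (x:ℝ) := lt_of_le_of_ne x.2.1 (Ne.symm hx0)
  have hx1' : (x:ℝ) < 1 := lt_of_le_of_ne x.2.2 hx1
  have h2 : ¬ (DiniSupR f x = ⊤ ∧ DiniSupL f x = ⊤ ∧ DiniInfR f x = ⊥ ∧ DiniInfL f x = ⊥) := by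
    intro hcon
    exact hx (Or.inl ⟨hx0', hx1', hcon.1, hcon.2.1, hcon.2.2.1, hcon.2.2.2⟩)
  rcases not_and_or.mp h2 with h | h2
  · obtain ⟨j, hj, hm⟩ := exists_mem_nplusUp ha hx1' h
    exact ⟨j, hj, Or.inl (Or.inl hm)⟩
  rcases not_and_or.mp h2 with h | h2
  · obtain ⟨j, hj, hm⟩ := exists_mem_nminusUp ha hx0' h
    exact ⟨j, hj, Or.inr (Or.inr hm)⟩
  rcases not_and_or.mp h2 with h | h
  · obtain ⟨j, hj, hm⟩ := exists_mem_nplusLow ha hx1' h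
    exact ⟨j, hj, Or.inr (Or.inl hm)⟩
  · obtain ⟨j, hj, hm⟩ := exists_mem_nminusLow ha hx0' h
    exact ⟨j, hj, Or.inl (Or.inr hm)⟩

def Dset (K : ℕ → KSp) (N : ℕ → ℕ) (l m : ℕ) : Set UI := ⋃ i ∈ Aset N l m, (K i : Set UI)

lemma aset_mono_m (N : ℕ → ℕ) (l : ℕ) {m m' : ℕ} (h : m ≤ m') : Aset N l m ⊆ Aset N l m' := by
  apply Set.union_subset_union_right
  exact Set.biUnion_mono (Set.Ico_subset_Ico_right h) (fun i _ => le_refl _)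

lemma aset_one (N : ℕ → ℕ) (m : ℕ) : Aset N 1 m = Set.Icc 1 (N 1) := by
  have he : ∀ i : ℕ, Set.Icc (N i + 1) (N i + (1 - 1)) = (∅ : Set ℕ) :=
    fun i => Set.Icc_eq_empty (by omega)
  simp [Aset, he]

lemma aset_finite (N : ℕ → ℕ) (l m : ℕ) : (Aset N l m).Finite :=
  (Set.finite_Icc _ _).union ((Set.finite_Ico _ _).biUnion fun i _ => Set.finite_Icc _ _)

lemma aset_pos {N : ℕ → ℕ} {l m i : ℕ} (h : i ∈ Aset N l m) : 1 ≤ i := by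
  rcases h with h | h
  · exact h.1
  · obtain ⟨t, -, h⟩ := Set.mem_iUnion₂.mp h
    have := h.1; omega

lemma isClosed_Dset (K : ℕ → KSp) (N : ℕ → ℕ) (l m : ℕ) : IsClosed (Dset K N l m) :=
  (aset_finite N l m).isClosed_biUnion fun i _ => (K i).isClosed

lemma Dset_subset_union (K : ℕ → KSp) (N : ℕ → ℕ) (l m : ℕ) :
    Dset K N l m ⊆ ⋃ i ∈ Set.Ici 1, (K i : Set UI) := by
  intro x hx
  obtain ⟨i, hi, hxi⟩ := Set.mem_iUnion₂.mp hx
  exact Set.mem_biUnion (aset_pos hi) hxi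

lemma delta_antitone {δ : ℕ → ℝ} (hδ : memY δ) : ∀ p q : ℕ, 1 ≤ p → p ≤ q → δ q ≤ δ p := by
  intro p q hp hpq
  induction q with
  | zero => omega
  | succ q ih =>
    rcases Nat.lt_or_ge p (q+1) with h | h
    · have h1 : p ≤ q := by omega
      have h2 : 1 ≤ q := by omega
      exact le_trans (hδ.2.1 q h2).le (ih h1)
    · have : p = q + 1 := by omega
      rw [this]

lemma shiftSeq_memZ {n : ℕ → ℕ} (hn : memZ n) (k : ℕ) : memZ (shiftSeq n k) := by
  intro j hj
  have h1 := hn (j + k) (by omega)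
  have h2 := hn (j + k) (by omega)
  refine ⟨h1.1, ?_⟩
  have : n (j + k) + (j + k) ≤ n (j + k + 1) := h1.2
  simp only [shiftSeq]
  have : j + 1 + k = j + k + 1 := by omega
  rw [this]
  omega

lemma descend {K : ℕ → KSp} {n : ℕ → ℕ} {δ : ℕ → ℝ} {k : ℕ}
    (hδ : memY δ) (hS : memS K n δ k) :
    ∀ l, 1 ≤ l → ∀ x : UI,
      (∀ ε > 0, ∃ m, l ≤ m ∧ ∃ z ∈ Dset K (shiftSeq n k) l m, dist x z < ε) →
      x ∈ ⋃ i ∈ Set.Ici 1, (K i : Set UI) := by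
  intro l hl
  induction l, hl using Nat.le_induction with
  | base =>
    intro x hx
    have hcl : x ∈ closure (Dset K (shiftSeq n k) 1 1) := by
      rw [Metric.mem_closure_iff]
      intro ε hε
      obtain ⟨m, hm, z, hz, hd⟩ := hx ε hε
      refine ⟨z, ?_, hd⟩
      have : Aset (shiftSeq n k) 1 m = Aset (shiftSeq n k) 1 1 := by
        rw [aset_one, aset_one]
      unfold Dset at hz ⊢
      rwa [this] at hz
    rw [(isClosed_Dset K (shiftSeq n k) 1 1).closure_eq] at hcl
    exact Dset_subset_union K (shiftSeq n k) 1 1 hcl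
  | succ l hl IH =>
    intro x hx
    classical
    by_cases hA : ∃ M, x ∈ closure (Dset K (shiftSeq n k) (l+1) M)
    · obtain ⟨M, hM⟩ := hA
      rw [(isClosed_Dset K (shiftSeq n k) (l+1) M).closure_eq] at hM
      exact Dset_subset_union K (shiftSeq n k) (l+1) M hM
    push_neg at hA
    apply IH x
    intro ε hε
    obtain ⟨M₁, hM₁⟩ := ((hδ.2.2.eventually (gt_mem_nhds (half_pos hε))).and
      (eventually_ge_atTop (l+2))).exists
    obtain ⟨hM₁a, hM₁b⟩ := hM₁
    set M₀ := M₁ - 1 with hM₀def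
    have hM₀ : M₀ + 1 = M₁ := by omega
    have hclA := hA M₀
    rw [Metric.mem_closure_iff] at hclA
    push_neg at hclA
    obtain ⟨ε₀, hε₀, hfar⟩ := hclA
    obtain ⟨m, hm, z, hz, hdz⟩ := hx (min ε₀ (ε/2)) (lt_min hε₀ (half_pos hε))
    obtain ⟨i, hi, hzi⟩ := Set.mem_iUnion₂.mp hz
    have hinotin : i ∉ Aset (shiftSeq n k) (l+1) M₀ := by
      intro hcon
      have : z ∈ Dset K (shiftSeq n k) (l+1) M₀ := Set.mem_biUnion hcon hzi
      exact absurd hdz (not_lt.mpr (le_trans (min_le_left _ _) (hfar z this)))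
    have hex : ∃ t, i ∈ Aset (shiftSeq n k) (l+1) t := ⟨m, hi⟩
    set t := Nat.find hex with htdef
    have hti : i ∈ Aset (shiftSeq n k) (l+1) t := Nat.find_spec hex
    have htm : t ≤ m := Nat.find_min' hex hi
    have htM : M₀ < t := by
      by_contra hcon
      push_neg at hcon
      exact hinotin (aset_mono_m _ _ hcon hti)
    have hnot : i ∉ Aset (shiftSeq n k) (l+1) (t-1) := by
      intro hcon
      exact Nat.find_min hex (show t - 1 < t by omega) hcon
    have hsub := hS (l+1) t (by omega) (by omega)
    have hz2 : z ∈ ⋃ i' ∈ Aset (shiftSeq n k) ((l+1)-1) (t-1), nbhd (K i' : Set UI) (δ t) :=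
      hsub (Set.mem_biUnion (Set.mem_diff_of_mem hti hnot) hzi)
    obtain ⟨i', hi', hz3⟩ := Set.mem_iUnion₂.mp hz2
    obtain ⟨w, hw, hz4⟩ := Set.mem_iUnion₂.mp hz3
    rw [Metric.mem_ball] at hz4
    have hδt : δ t ≤ δ M₁ := delta_antitone hδ M₁ t (by omega) (by omega)
    refine ⟨t - 1, by omega, w, ?_, ?_⟩
    · have : (l+1) - 1 = l := by omega
      rw [this] at hi'
      exact Set.mem_biUnion hi' hw
    · have h2 : δ t < ε / 2 := lt_of_le_of_lt hδt hM₁a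
      have h3 := min_le_right ε₀ (ε/2)
      have h4 := dist_triangle x z w
      linarith

lemma n_ge_self {n : ℕ → ℕ} (hn : memZ n) : ∀ j, 1 ≤ j → j ≤ n j := by
  intro j hj
  induction j with
  | zero => omega
  | succ j ih =>
    rcases Nat.lt_or_ge 0 j with h | h
    · have h1 := (hn j h).2
      have h2 := ih h
      omega
    · have : j = 0 := by omega
      subst this
      exact (hn 1 (le_refl 1)).1

/-- If `(K, f) ∈ 𝒳`, then `⋃_{i≥1} K_i = N(f)`. -/
theorem iUnion_eq_nonKnot_of_memXcal (K : ℕ → KSp) (f : C(UI, ℝ)) (h : memXcal K f) :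
    (⋃ i ∈ Set.Ici 1, (K i : Set UI)) = NonKnot ⇑f := by
  obtain ⟨n, δ, a, b, k, hZ, hY, hXa, hXb, hS, hmain⟩ := h
  apply Set.Subset.antisymm
  · refine Set.iUnion₂_subset fun i hi => ?_
    have hi1 : 1 ≤ i := hi
    set j := max i 1 with hjdef
    have hj1 : 1 ≤ j := le_max_right _ _
    have hij : i ≤ n j := le_trans (le_max_left i 1) (n_ge_self hZ j hj1)
    intro x hx
    have hxm : ∀ m, j ≤ m → ∃ z ∈ NN ⇑f (b j), dist x z < δ m := by
      intro m hm
      have h2 := (hmain j m hj1 hm).2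
      have hmem : x ∈ nbhd (NN ⇑f (b j)) (δ m) := by
        refine h2 (Set.mem_biUnion ?_ hx)
        exact Set.mem_union_left _ (Set.mem_Icc.mpr ⟨hi1, hij⟩)
      obtain ⟨z, hz, hxz⟩ := Set.mem_iUnion₂.mp hmem
      exact ⟨z, hz, Metric.mem_ball.mp hxz⟩
    have hcl : x ∈ closure (NN ⇑f (b j)) := by
      rw [Metric.mem_closure_iff]
      intro ε hε
      obtain ⟨m, hm⟩ := ((hY.2.2.eventually (gt_mem_nhds hε)).and (eventually_ge_atTop j)).exists
      obtain ⟨z, hz, hxz⟩ := hxm m hm.2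
      exact ⟨z, hz, lt_trans hxz hm.1⟩
    rw [(isClosed_NN f.continuous (b j)).closure_eq] at hcl
    exact NN_subset_nonKnot (⇑f) (b j) hcl
  · intro x hx
    obtain ⟨j, hj1, hNN⟩ := nonKnot_exists_NN hXa hx
    apply descend hY hS j hj1 x
    intro ε hε
    obtain ⟨m, hm⟩ := ((hY.2.2.eventually (gt_mem_nhds hε)).and (eventually_ge_atTop j)).exists
    have h1 := (hmain j m hj1 hm.2).1 hNN
    obtain ⟨i, hi, hz3⟩ := Set.mem_iUnion₂.mp h1
    obtain ⟨z, hz, hxz⟩ := Set.mem_iUnion₂.mp hz3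
    rw [Metric.mem_ball] at hxz
    exact ⟨m, hm.2, z, Set.mem_biUnion hi hz, lt_trans hxz hm.1⟩

end
end
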